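/- arXiv:2108.10058 — 3 statements merged into one kernel-verified Lean document; each statement's English description precedes it below -/
import Mathlib

section
/- Let A ⊆ GL_m(ℝ) be of the form A = L ∩ GL_m(ℝ) for a linear subspace L of m×m real matrices, and suppose the identity matrix lies in A. Then A is a group under matrix multiplication if and only if A is closed under matrix multiplication. -/
/-- A linear subset A = L ∩ GL_m(ℝ) containing the identity is a group (closed
under multiplication and inversion) iff it is closed under multiplication. -/
theorem stmt3 (m : ℕ) (L : Submodule ℝ (Matrix (Fin m) (Fin m) ℝ))
    (A : Set (Matrix (Fin m) (Fin m) ℝ))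
    (hA : A = {a | a ∈ L ∧ IsUnit a})
    (h1 : (1 : Matrix (Fin m) (Fin m) ℝ) ∈ A) :
    ((∀ a ∈ A, ∀ b ∈ A, a * b ∈ A) ∧ (∀ a ∈ A, a⁻¹ ∈ A)) ↔
      (∀ a ∈ A, ∀ b ∈ A, a * b ∈ A) := by
  constructor
  · exact fun h => h.1
  · intro hmul
    refine ⟨hmul, fun a ha => ?_⟩
    subst hA
    obtain ⟨haL, haU⟩ := ha
    -- all powers of a are in A
    have hpow : ∀ k : ℕ, a ^ k ∈ {a | a ∈ L ∧ IsUnit a} := by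
      intro k
      induction k with
      | zero => simpa using h1
      | succ n ih => rw [pow_succ]; exact hmul _ ih _ ⟨haL, haU⟩
    have hdet : IsUnit a.det := (Matrix.isUnit_iff_isUnit_det a).mp haU
    -- constant coefficient of charpoly is nonzero
    set p := a.charpoly with hp
    set c := p.coeff 0 with hc
    have hc0 : c ≠ 0 := by
      intro h0
      have hdet' : a.det = (-1) ^ m * c := by simpa using Matrix.det_eq_sign_charpoly_coeff a
      rw [h0, mul_zero] at hdet'
      exact hdet.ne_zero hdet'
    -- Cayley-Hamilton
    have hch : Polynomial.aeval a p = 0 := Matrix.aeval_self_charpoly a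
    have hdiv : p.divX * Polynomial.X + Polynomial.C c = p := Polynomial.divX_mul_X_add p
    have hkey : Polynomial.aeval a p.divX * a + c • (1 : Matrix (Fin m) (Fin m) ℝ) = 0 := by
      have := congrArg (Polynomial.aeval a) hdiv
      rw [hch] at this
      simpa [Algebra.algebraMap_eq_smul_one] using this
    set b := (-c⁻¹) • Polynomial.aeval a p.divX with hb
    have hba : b * a = 1 := by
      have : Polynomial.aeval a p.divX * a = -(c • 1) := by
        rw [eq_neg_iff_add_eq_zero]; exact hkey
      rw [hb, Matrix.smul_mul, this]
      simp [smul_smul, hc0]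
    have hab : a * b = 1 := mul_eq_one_comm.mpr hba
    have hinv : a⁻¹ = b := Matrix.inv_eq_right_inv hab
    rw [hinv]
    exact ⟨Submodule.smul_mem L _ (by
      rw [Polynomial.aeval_eq_sum_range]
      exact Submodule.sum_mem L fun k _ => Submodule.smul_mem L _ (hpow k).1),
      by
        have := Matrix.isUnit_nonsing_inv_iff.mpr haU
        rwa [hinv] at this⟩
end

section
/- Let G be a directed acyclic graph on vertex set [m] whose edges j → i all satisfy j > i (so adjacency-type matrices are upper triangular). A positive definite matrix Ψ ∈ PD_m is of the form Ψ = (id − Λ)ᵀ Ω^{-1} (id − Λ) with Λ supported on the edges of G (λ_{ij} = 0 unless j → i) and Ω diagonal positive, if and only if the upper triangular Cholesky factor a of Ψ (with positive diagonal, Ψ = aᵀa) satisfies a_{ij} = 0 for all i ≠ j with j not → i in G. -/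
open Matrix in
/-- For a DAG on [m] with edges j → i only when i < j, a positive definite Ψ
lies in the DAG model iff its Cholesky factor has zeros off the edge support. -/
theorem stmt9 (m : ℕ) (edge : Fin m → Fin m → Prop)
    (hedge : ∀ j i : Fin m, edge j i → i < j)
    (Ψ : Matrix (Fin m) (Fin m) ℝ) (hΨ : Ψ.PosDef) :
    (∃ (Λ : Matrix (Fin m) (Fin m) ℝ) (ω : Fin m → ℝ),
      (∀ i j : Fin m, ¬ edge j i → Λ i j = 0) ∧ (∀ i, 0 < ω i) ∧
      Ψ = (1 - Λ)ᵀ * (Matrix.diagonal ω)⁻¹ * (1 - Λ)) ↔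
    (∃ a : Matrix (Fin m) (Fin m) ℝ,
      (∀ i j : Fin m, j < i → a i j = 0) ∧ (∀ i, 0 < a i i) ∧
      Ψ = aᵀ * a ∧ (∀ i j : Fin m, i ≠ j → ¬ edge j i → a i j = 0)) := by
  have hinv : ∀ ω : Fin m → ℝ, (∀ i, ω i ≠ 0) →
      (Matrix.diagonal ω)⁻¹ = Matrix.diagonal (fun i => (ω i)⁻¹) := by
    intro ω h
    refine Matrix.inv_eq_left_inv ?_
    rw [Matrix.diagonal_mul_diagonal]
    have : (fun i => (ω i)⁻¹ * ω i) = fun _ => (1 : ℝ) :=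
      funext fun i => inv_mul_cancel₀ (h i)
    rw [this, Matrix.diagonal_one]
  constructor
  · rintro ⟨Λ, ω, hΛ, hω, hΨeq⟩
    set s : Fin m → ℝ := fun i => Real.sqrt (ω i)⁻¹ with hs
    have hspos : ∀ i, 0 < s i := fun i => Real.sqrt_pos.2 (inv_pos.2 (hω i))
    have hΛzero : ∀ i j : Fin m, ¬ i < j → Λ i j = 0 := by
      intro i j h
      exact hΛ i j (fun he => h (hedge j i he))
    refine ⟨Matrix.diagonal s * (1 - Λ), ?_, ?_, ?_, ?_⟩
    · intro i j hji
      rw [Matrix.diagonal_mul]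
      have : (1 - Λ) i j = 0 := by
        simp [Matrix.one_apply, hji.ne', hΛzero i j (not_lt.2 hji.le)]
      simp [this]
    · intro i
      rw [Matrix.diagonal_mul]
      have : (1 - Λ) i i = 1 := by
        simp [Matrix.one_apply, hΛzero i i (lt_irrefl i)]
      rw [this, mul_one]; exact hspos i
    · rw [hΨeq, hinv ω (fun i => (hω i).ne')]
      rw [Matrix.transpose_mul, Matrix.diagonal_transpose]
      simp only [Matrix.mul_assoc]
      rw [← Matrix.mul_assoc (Matrix.diagonal s) (Matrix.diagonal s),
        Matrix.diagonal_mul_diagonal]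
      have : (fun i => s i * s i) = fun i => (ω i)⁻¹ := by
        funext i
        exact Real.mul_self_sqrt (le_of_lt (inv_pos.2 (hω i)))
      rw [this]
    · intro i j hij he
      rw [Matrix.diagonal_mul]
      simp [Matrix.one_apply, hij, hΛ i j he]
  · rintro ⟨a, htri, hdiag, hΨeq, hsupp⟩
    set d : Fin m → ℝ := fun i => (a i i)⁻¹ with hd
    refine ⟨1 - Matrix.diagonal d * a, fun i => ((a i i)^2)⁻¹, ?_, ?_, ?_⟩
    · intro i j he
      rw [Matrix.sub_apply, Matrix.diagonal_mul]
      rcases eq_or_ne i j with rfl | hij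
      · simp [hd, (hdiag i).ne']
      · simp [Matrix.one_apply, hij, hsupp i j hij he]
    · intro i; exact inv_pos.2 (pow_pos (hdiag i) 2)
    · have h1 : (1 : Matrix (Fin m) (Fin m) ℝ) - (1 - Matrix.diagonal d * a)
          = Matrix.diagonal d * a := sub_sub_cancel 1 _
      rw [h1, hinv _ (fun i => (inv_pos.2 (pow_pos (hdiag i) 2)).ne')]
      rw [Matrix.transpose_mul, Matrix.diagonal_transpose]
      simp only [Matrix.mul_assoc]
      rw [← Matrix.mul_assoc (Matrix.diagonal d),
        Matrix.diagonal_mul_diagonal,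
        ← Matrix.mul_assoc (Matrix.diagonal fun i => d i * ((a i i ^ 2)⁻¹)⁻¹)
          (Matrix.diagonal d) a,
        Matrix.diagonal_mul_diagonal]
      have : (fun i => d i * ((a i i ^ 2)⁻¹)⁻¹ * d i) = fun _ => (1 : ℝ) := by
        funext i
        have h0 := (hdiag i).ne'
        field_simp [hd]
        simp only [hd, inv_pow]; exact inv_mul_cancel₀ (pow_ne_zero 2 h0)
      rw [this, Matrix.diagonal_one, one_mul, hΨeq]
end

section
/- Let A be a set of m×m real invertible matrices closed under nonzero scalar multiples, and let Y ∈ ℝ^{m×n}. Then the supremum over a ∈ A of the function ℓ_Y(aᵀa) = log det(aᵀa) − (1/n)‖aY‖² equals +∞ if and only if inf{‖bY‖ : b ∈ A, det(b) = ±1} = 0. -/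
private lemma stmt10_key (m n t s : ℝ) (hm : 0 < m) (hn : 0 < n) (ht : 0 < t)
    (hs : 0 < s) :
    m * Real.log (t ^ 2) - t ^ 2 * s / n ≤ m * Real.log (m * n / s) - m := by
  have h1 : Real.log (t ^ 2 * s / n / m) ≤ t ^ 2 * s / n / m - 1 :=
    Real.log_le_sub_one_of_pos (by positivity)
  have h2 : Real.log (t ^ 2 * s / n / m)
      = Real.log (t ^ 2) + Real.log s - Real.log n - Real.log m := by
    rw [Real.log_div (by positivity) (by positivity),
      Real.log_div (by positivity) (by positivity),
      Real.log_mul (by positivity) (by positivity)]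
  have h3 : Real.log (m * n / s) = Real.log m + Real.log n - Real.log s := by
    rw [Real.log_div (by positivity) (by positivity),
      Real.log_mul (by positivity) (by positivity)]
  rw [h2] at h1
  have h4 := mul_le_mul_of_nonneg_left h1 hm.le
  rw [h3]
  have hmn : m ≠ 0 := ne_of_gt hm
  have hx : m * (t ^ 2 * s / n / m) = t ^ 2 * s / n := by field_simp
  nlinarith [h4, hx]

open Matrix in
/-- For A closed under nonzero scalar multiples, the log-likelihood
ℓ_Y(aᵀa) = log det(aᵀa) − (1/n)‖aY‖² is unbounded above over A iff the
infimum of ‖bY‖ over b ∈ A with det b = ±1 is zero. -/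
theorem stmt10 (m n : ℕ) (hm : 0 < m) (hn : 0 < n)
    (A : Set (Matrix (Fin m) (Fin m) ℝ))
    (hAinv : ∀ a ∈ A, IsUnit a)
    (hAscal : ∀ a ∈ A, ∀ t : ℝ, t ≠ 0 → t • a ∈ A)
    (Y : Matrix (Fin m) (Fin n) ℝ) :
    (∀ M : ℝ, ∃ a ∈ A,
      M < Real.log (aᵀ * a).det - (1 / (n : ℝ)) * ∑ i, ∑ j, ((a * Y) i j) ^ 2) ↔
    (∀ ε : ℝ, 0 < ε → ∃ b ∈ A, (b.det = 1 ∨ b.det = -1) ∧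
      ∑ i, ∑ j, ((b * Y) i j) ^ 2 < ε) := by
  have mR : (0:ℝ) < m := Nat.cast_pos.mpr hm
  have nR : (0:ℝ) < n := Nat.cast_pos.mpr hn
  have hsmul : ∀ (c : ℝ) (b : Matrix (Fin m) (Fin m) ℝ),
      ∑ i, ∑ j, (((c • b) * Y) i j) ^ 2 = c ^ 2 * ∑ i, ∑ j, ((b * Y) i j) ^ 2 := by
    intro c b
    simp [smul_mul_assoc, Matrix.smul_apply, smul_eq_mul, mul_pow, Finset.mul_sum]
  constructor
  · intro h ε hε
    obtain ⟨a, haA, hval⟩ := h ((m:ℝ) * Real.log ((m*n)/ε))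
    have hd : a.det ≠ 0 := by
      have := (Matrix.isUnit_iff_isUnit_det a).mp (hAinv a haA)
      exact this.ne_zero
    have habs : (0:ℝ) < |a.det| := abs_pos.mpr hd
    set t : ℝ := |a.det| ^ ((m:ℝ)⁻¹) with htdef
    have ht : 0 < t := Real.rpow_pos_of_pos habs _
    have htm : t ^ m = |a.det| := by
      rw [htdef, ← Real.rpow_natCast (|a.det| ^ ((m:ℝ)⁻¹)) m, ← Real.rpow_mul habs.le,
        inv_mul_cancel₀ (ne_of_gt mR), Real.rpow_one]
    set b := t⁻¹ • a with hb
    have hbA : b ∈ A := hAscal a haA _ (inv_ne_zero ht.ne')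
    have hbdet : b.det = 1 ∨ b.det = -1 := by
      have hdb : b.det = (t⁻¹) ^ m * a.det := by
        rw [hb, Matrix.det_smul]; simp [Fintype.card_fin]
      rw [hdb, inv_pow, htm]
      rcases hd.lt_or_gt with hlt | hgt
      · right; rw [abs_of_neg hlt]; field_simp
      · left; rw [abs_of_pos hgt]; field_simp
    set s := ∑ i, ∑ j, ((b * Y) i j) ^ 2 with hsdef
    have hs0 : 0 ≤ s := by positivity
    have hSa : ∑ i, ∑ j, ((a * Y) i j) ^ 2 = t ^ 2 * s := by
      have h' := hsmul t b
      rw [hb, smul_smul, mul_inv_cancel₀ ht.ne', one_smul] at h'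
      exact h'
    have hlogdet : Real.log (aᵀ * a).det = (m:ℝ) * Real.log (t ^ 2) := by
      rw [Matrix.det_mul, Matrix.det_transpose,
        show a.det * a.det = (t ^ 2) ^ m by
          rw [← abs_mul_abs_self a.det, ← htm]; ring,
        Real.log_pow]
    rw [hlogdet, hSa] at hval
    rcases hs0.eq_or_lt with h0 | hspos
    · refine ⟨b, hbA, hbdet, ?_⟩
      rw [← hsdef, ← h0]; exact hε
    · refine ⟨b, hbA, hbdet, ?_⟩
      rw [← hsdef]
      have hkey := stmt10_key m n t s mR nR ht hspos
      have hlt : Real.log ((m:ℝ) * n / ε) < Real.log ((m:ℝ) * n / s) := by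
        have h5 : (m:ℝ) * Real.log ((m:ℝ)*n/ε) < (m:ℝ) * Real.log ((m:ℝ)*n/s) := by
          have : (1 / (n:ℝ)) * (t ^ 2 * s) = t ^ 2 * s / n := by ring
          rw [this] at hval
          linarith
        exact lt_of_mul_lt_mul_left h5 mR.le
      have this : (m:ℝ) * n / ε < (m:ℝ) * n / s := by
        exact Iff.mp (Real.log_lt_log_iff (by positivity) (by positivity)) hlt
      rw [div_lt_div_iff₀ hε hspos] at this
      exact lt_of_mul_lt_mul_left this (by positivity)
  · intro h M
    obtain ⟨b, hbA, hbdet, hbs⟩ :=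
      h ((m:ℝ) * n * Real.exp (-(M / m) - 1)) (by positivity)
    set s := ∑ i, ∑ j, ((b * Y) i j) ^ 2 with hsdef
    have hs0 : 0 ≤ s := by positivity
    have hdb2 : b.det * b.det = 1 := by
      rcases hbdet with h1 | h1 <;> rw [h1] <;> norm_num
    have hval : ∀ t : ℝ, 0 < t →
        Real.log ((t • b)ᵀ * (t • b)).det
          - (1 / (n:ℝ)) * ∑ i, ∑ j, (((t • b) * Y) i j) ^ 2
        = (m:ℝ) * Real.log (t ^ 2) - t ^ 2 * s / n := by
      intro t ht
      rw [hsmul t b, Matrix.det_mul, Matrix.det_transpose, Matrix.det_smul]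
      simp only [Fintype.card_fin]
      rw [show t ^ m * b.det * (t ^ m * b.det) = (t ^ 2) ^ m by
        rw [show t ^ m * b.det * (t ^ m * b.det)
            = t ^ m * t ^ m * (b.det * b.det) by ring, hdb2, mul_one,
          ← pow_add, ← two_mul, pow_mul], Real.log_pow]
      ring
    rcases hs0.eq_or_lt with h0 | hspos
    · refine ⟨Real.exp ((M + 1) / (2 * m)) • b,
        hAscal b hbA _ (Real.exp_ne_zero _), ?_⟩
      rw [hval _ (Real.exp_pos _), ← h0]
      rw [show (Real.exp ((M + 1) / (2 * m))) ^ 2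
          = Real.exp ((M + 1) / (2 * m) + (M + 1) / (2 * m)) by
        rw [Real.exp_add]; ring, Real.log_exp]
      have : (m:ℝ) * ((M + 1) / (2 * m) + (M + 1) / (2 * m)) = M + 1 := by
        field_simp; ring
      rw [this]
      have hz : Real.exp ((M + 1) / (2 * (m:ℝ)) + (M + 1) / (2 * (m:ℝ))) * 0 / (n:ℝ) = 0 := by
        ring
      linarith
    · set t : ℝ := Real.sqrt ((m:ℝ) * n / s) with htdef
      have ht : 0 < t := Real.sqrt_pos.mpr (by positivity)
      have ht2 : t ^ 2 = (m:ℝ) * n / s := Real.sq_sqrt (by positivity)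
      refine ⟨t • b, hAscal b hbA _ ht.ne', ?_⟩
      rw [hval t ht, ht2]
      have h6 : t ^ 2 * s / n = (m:ℝ) := by
        rw [ht2]; field_simp
      rw [← ht2, h6, ht2]
      have h7 : Real.exp (M / m + 1) < (m:ℝ) * n / s := by
        rw [lt_div_iff₀ hspos]
        calc Real.exp (M / m + 1) * s
            < Real.exp (M / m + 1) * ((m:ℝ) * n * Real.exp (-(M / m) - 1)) := by
              exact mul_lt_mul_of_pos_left hbs (Real.exp_pos _)
          _ = (m:ℝ) * n := by
              rw [← mul_assoc, mul_comm (Real.exp (M / m + 1)) ((m:ℝ) * n),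
                mul_assoc, ← Real.exp_add]
              norm_num
      have h8 : M / m + 1 < Real.log ((m:ℝ) * n / s) := by
        have := Real.log_lt_log (Real.exp_pos _) h7
        rwa [Real.log_exp] at this
      have h9 : (m:ℝ) * (M / m + 1) - m = M := by
        field_simp; ring
      have h10 := mul_lt_mul_of_pos_left h8 mR
      linarith
end
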